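/- Let P : Fin n → Fin n → ℝ be row-stochastic and irreducible, meaning that for all states i, j there exists k ≥ 1 with (P^k) i j > 0, and let π : Fin n → ℝ satisfy π s > 0 for all s and ∑_s π s · P s s' = π s' for every s'. Then for every V : Fin n → ℝ, the Dirichlet seminorm vanishes, i.e. (1/2)·∑_{s,s'} π s · P s s' · (V s' − V s)² = 0, if and only if V is constant, i.e. there exists c ∈ ℝ with V s = c for all s. -/

import Mathlib

open Finset Matrix

theorem stmt_11 (n : ℕ)
    (P : Matrix (Fin n) (Fin n) ℝ)
    (hP0 : ∀ s s', 0 ≤ P s s') (hP1 : ∀ s, ∑ s', P s s' = 1)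
    (hirr : ∀ i j : Fin n, ∃ k : ℕ, 1 ≤ k ∧ 0 < (P ^ k) i j)
    (π : Fin n → ℝ)
    (hπpos : ∀ s, 0 < π s)
    (hstat : ∀ s', ∑ s, π s * P s s' = π s')
    (V : Fin n → ℝ) :
    (1 / 2 : ℝ) * ∑ s, ∑ s', π s * P s s' * (V s' - V s) ^ 2 = 0 ↔
      ∃ c : ℝ, ∀ s, V s = c := by
  constructor
  · intro h
    rcases Nat.eq_zero_or_pos n with hn | hn
    · subst hn; exact ⟨0, fun s => absurd s.2 (by omega)⟩
    have hterm : ∀ s ∈ (univ : Finset (Fin n)), ∀ s' ∈ (univ : Finset (Fin n)),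
        0 ≤ π s * P s s' * (V s' - V s) ^ 2 := fun s _ s' _ =>
      mul_nonneg (mul_nonneg (hπpos s).le (hP0 s s')) (sq_nonneg _)
    have hsum : ∑ s, ∑ s', π s * P s s' * (V s' - V s) ^ 2 = 0 := by
      have := h
      field_simp at this
      simpa using this
    have hzero : ∀ s s', π s * P s s' * (V s' - V s) ^ 2 = 0 := by
      intro s s'
      have h1 := (Finset.sum_eq_zero_iff_of_nonneg
        (fun s _ => Finset.sum_nonneg (fun s' _ => hterm s (mem_univ s) s' (mem_univ s')))).mp
        hsum s (mem_univ s)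
      exact (Finset.sum_eq_zero_iff_of_nonneg
        (fun s' _ => hterm s (mem_univ s) s' (mem_univ s'))).mp h1 s' (mem_univ s')
    have key : ∀ s s', 0 < P s s' → V s' = V s := by
      intro s s' hp
      have := hzero s s'
      have hps : π s * P s s' > 0 := mul_pos (hπpos s) hp
      have : (V s' - V s) ^ 2 = 0 := by
        rcases mul_eq_zero.mp this with h' | h'
        · exact absurd h' hps.ne'
        · exact h'
      have := pow_eq_zero_iff (n := 2) (by norm_num) |>.mp this
      linarith [sub_eq_zero.mp this]
    have pow_key : ∀ k : ℕ, ∀ i j : Fin n, 0 < (P ^ k) i j → V j = V i := by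
      intro k
      induction k with
      | zero =>
        intro i j h
        rcases eq_or_ne i j with rfl | hne
        · rfl
        · simp [Matrix.one_apply_ne hne] at h
      | succ k ih =>
        intro i j h
        rw [pow_succ] at h
        have hmul : (P ^ k * P) i j = ∑ m, (P ^ k) i m * P m j := rfl
        rw [hmul] at h
        have hPk0 : ∀ m i j, 0 ≤ (P ^ m) i j := by
          intro m
          induction m with
          | zero => intro i j; simp [Matrix.one_apply]; split <;> norm_num
          | succ m ihm =>
            intro i j
            rw [pow_succ, Matrix.mul_apply]
            exact Finset.sum_nonneg fun c _ => mul_nonneg (ihm i c) (hP0 c j)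
        obtain ⟨m, _, hm⟩ := Finset.exists_lt_of_sum_lt (f := fun _ : Fin n => (0:ℝ))
          (by simpa using h)
        have h1 : 0 < (P ^ k) i m := by
          by_contra hc
          push_neg at hc
          have : (P ^ k) i m = 0 := le_antisymm hc (hPk0 k i m)
          simp [this] at hm
        have h2 : 0 < P m j := by
          by_contra hc
          push_neg at hc
          have : P m j = 0 := le_antisymm hc (hP0 m j)
          simp [this] at hm
        exact (key m j h2).trans (ih i m h1)
    obtain ⟨s0⟩ : Nonempty (Fin n) := ⟨⟨0, hn⟩⟩
    refine ⟨V s0, fun s => ?_⟩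
    obtain ⟨k, _, hk⟩ := hirr s0 s
    exact pow_key k s0 s hk
  · rintro ⟨c, hc⟩
    simp [hc]
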